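/- For every even integer w ≥ 2, the gap-counting function of the numerical semigroup Γ_{w,w+1} generated by w and w+1 satisfies I_{w,w+1}(1 + (w² − w)/2) = (w² + 2w)/8 − 1; that is, the number of natural numbers n with n ≥ 1 + (w² − w)/2 not belonging to Γ_{w,w+1} is exactly (w² + 2w)/8 − 1. -/

import Mathlib

open Finset

lemma mem_gamma_iff (w n : ℕ) (hw : 0 < w) :
    n ∈ AddSubmonoid.closure ({w, w + 1} : Set ℕ) ↔ n % w ≤ n / w := by
  rw [AddSubmonoid.mem_closure_pair]
  constructor
  · rintro ⟨a, b, rfl⟩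
    simp only [smul_eq_mul]
    have h : a * w + b * (w + 1) = b + (a + b) * w := by ring
    rw [h, Nat.add_mul_mod_self_right, Nat.add_mul_div_right _ _ hw]
    exact (Nat.mod_le b w).trans (by rw [← add_assoc]; exact Nat.le_add_left _ _)
  · intro h
    refine ⟨n / w - n % w, n % w, ?_⟩
    simp only [smul_eq_mul]
    have h2 := Nat.div_add_mod n w
    have h3 : n / w - n % w + n % w = n / w := by omega
    nlinarith [h3, h2]

lemma fiber_empty (w T q : ℕ) (hw : 0 < w) (hT : q * w + w ≤ T) :
    ((Finset.range (w*w)).filter (fun n => (T ≤ n ∧ n / w < n % w) ∧ n / w = q)) = ∅ := by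
  ext n
  simp only [mem_filter, mem_range, Finset.notMem_empty, iff_false, not_and]
  rintro _ ⟨hTn, hlt⟩ hq
  have h1 := Nat.div_add_mod n w
  have h2 : n % w < w := Nat.mod_lt _ hw
  rw [hq, mul_comm] at h1
  omega

lemma fiber_eq (w T q lo : ℕ) (hw : 0 < w) (hloq : q < lo) (hlo : lo ≤ w)
    (hqw : q + 1 ≤ w) (hT : T ≤ q * w + lo) (hcase : lo = q + 1 ∨ q * w + lo = T) :
    ((Finset.range (w*w)).filter (fun n => (T ≤ n ∧ n / w < n % w) ∧ n / w = q)) =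
      Finset.Ico (q*w + lo) (q*w + w) := by
  have hww : (q+1) * w ≤ w * w := Nat.mul_le_mul_right _ hqw
  have hexp : (q+1) * w = q * w + w := by ring
  ext n
  simp only [mem_filter, mem_range, Finset.mem_Ico]
  constructor
  · rintro ⟨hn, ⟨hTn, hlt⟩, hq⟩
    have h1 := Nat.div_add_mod n w
    have h2 : n % w < w := Nat.mod_lt _ hw
    rw [hq, mul_comm] at h1
    rcases hcase with h | h
    · omega
    · omega
  · rintro ⟨h1, h2⟩
    have hdiv : n / w = q := by
      refine Nat.div_eq_of_lt_le (le_trans (by rw [mul_comm]; exact Nat.le_add_right _ _) h1) ?_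
      calc n < q * w + w := h2
        _ = (q + 1) * w := by ring
    have h3 := Nat.div_add_mod n w
    rw [hdiv, mul_comm] at h3
    refine ⟨by omega, ⟨by omega, by omega⟩, hdiv⟩

/-- For even `w ≥ 2`, the number of gaps of the numerical semigroup `Γ_{w,w+1} = ⟨w, w+1⟩`
that are at least `1 + (w² − w)/2` is exactly `(w² + 2w)/8 − 1`; i.e.
`I_{w,w+1}(1 + (w² − w)/2) = (w² + 2w)/8 − 1`. -/
theorem gap_count_V1 (w : ℕ) (hw : 2 ≤ w) (hweven : Even w) :
    {n : ℕ | 1 + (w ^ 2 - w) / 2 ≤ n ∧ n ∉ AddSubmonoid.closure ({w, w + 1} : Set ℕ)}.ncard =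
      (w ^ 2 + 2 * w) / 8 - 1 := by
  obtain ⟨m, rfl⟩ := hweven
  obtain ⟨k, rfl⟩ : ∃ k, m = k + 1 := ⟨m - 1, by omega⟩
  set w := k + 1 + (k + 1) with hwdef
  have hw0 : 0 < w := by omega
  have hwval : w = 2 * k + 2 := by omega
  have hT : 1 + (w ^ 2 - w) / 2 = 2*(k*k) + 3*k + 2 := by
    have h : w ^ 2 = 4*(k*k) + 8*k + 4 := by rw [hwdef]; ring
    omega
  set T : ℕ := 2*(k*k) + 3*k + 2 with hTdef
  have hset : {n : ℕ | 1 + (w ^ 2 - w) / 2 ≤ n ∧ n ∉ AddSubmonoid.closure ({w, w + 1} : Set ℕ)}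
      = ↑((Finset.range (w*w)).filter (fun n => T ≤ n ∧ n / w < n % w)) := by
    ext n
    simp only [Set.mem_setOf_eq, Finset.coe_filter, Finset.mem_range,
      mem_gamma_iff _ _ hw0, hT, not_le]
    constructor
    · rintro ⟨h1, h2⟩
      have hmw : n % w < w := Nat.mod_lt _ hw0
      exact ⟨(Nat.div_lt_iff_lt_mul hw0).mp (by omega), h1, h2⟩
    · rintro ⟨_, h1, h2⟩
      exact ⟨h1, h2⟩
  rw [hset, Set.ncard_coe_finset]
  have hmap : ∀ n ∈ (Finset.range (w*w)).filter (fun n => T ≤ n ∧ n / w < n % w),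
      n / w ∈ Finset.range w := by
    intro n hn
    simp only [mem_filter, mem_range] at hn ⊢
    exact (Nat.div_lt_iff_lt_mul hw0).mpr hn.1
  rw [Finset.card_eq_sum_card_fiberwise hmap]
  simp only [Finset.filter_filter]
  have hsplit1 : (0:ℕ) ≤ k := Nat.zero_le k
  have hsplit2 : k ≤ k + 1 := by omega
  have hsplit3 : k + 1 ≤ w := by omega
  rw [Finset.range_eq_Ico w,
    ← Finset.sum_Ico_consecutive _ hsplit1 (le_trans hsplit2 hsplit3),
    ← Finset.sum_Ico_consecutive _ hsplit2 hsplit3]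
  have hzero : ∑ q ∈ Finset.Ico 0 k,
      ((Finset.range (w*w)).filter (fun n => (T ≤ n ∧ n / w < n % w) ∧ n / w = q)).card = 0 := by
    apply Finset.sum_eq_zero
    intro q hq
    simp only [Finset.mem_Ico] at hq
    rw [fiber_empty w T q hw0 ?_, Finset.card_empty]
    have h1 : (q+1)*w ≤ k*w := Nat.mul_le_mul_right _ (by omega)
    have h2 : k*w = 2*(k*k) + 2*k := by rw [hwdef]; ring
    have h3 : (q+1)*w = q*w + w := by ring
    omega
  have hmid : ∑ q ∈ Finset.Ico k (k+1),
      ((Finset.range (w*w)).filter (fun n => (T ≤ n ∧ n / w < n % w) ∧ n / w = q)).card = k := by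
    rw [Finset.sum_Ico_eq_sum_range]
    simp only [Nat.add_sub_cancel_left, Finset.sum_range_one, Nat.add_zero]
    have hkw : k*w = 2*(k*k) + 2*k := by rw [hwdef]; ring
    rw [fiber_eq w T k (k+2) hw0 (by omega) (by omega) (by omega) (by omega) (Or.inr (by omega))]
    rw [Nat.card_Ico]
    omega
  have hhi : ∑ q ∈ Finset.Ico (k+1) w,
      ((Finset.range (w*w)).filter (fun n => (T ≤ n ∧ n / w < n % w) ∧ n / w = q)).card
      = ∑ j ∈ Finset.range (k+1), j := by
    have hstep : ∀ q ∈ Finset.Ico (k+1) w,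
        ((Finset.range (w*w)).filter (fun n => (T ≤ n ∧ n / w < n % w) ∧ n / w = q)).card
        = w - (q+1) := by
      intro q hq
      simp only [Finset.mem_Ico] at hq
      have h1 : (k+1)*w ≤ q*w := Nat.mul_le_mul_right _ hq.1
      have h2 : (k+1)*w = 2*(k*k) + 4*k + 2 := by rw [hwdef]; ring
      rw [fiber_eq w T q (q+1) hw0 (by omega) (by omega) (by omega) (by omega) (Or.inl rfl)]
      rw [Nat.card_Ico]
      omega
    rw [Finset.sum_congr rfl hstep, Finset.sum_Ico_eq_sum_range]
    have hn : w - (k+1) = k + 1 := by omega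
    rw [hn]
    rw [← Finset.sum_range_reflect (fun j => j) (k+1)]
    apply Finset.sum_congr rfl
    intro i hi
    simp only [Finset.mem_range] at hi
    omega
  rw [hzero, hmid, hhi, hwval]
  have hgauss := Finset.sum_range_id_mul_two (k+1)
  have h9 : ((2*k+2) ^ 2 + 2 * (2*k+2)) = 4*(k*k) + 12*k + 8 := by ring
  rw [h9]
  rw [show (k+1)*(k+1-1) = k*k + k from by simp; ring] at hgauss
  obtain ⟨x, hx⟩ : ∃ x, k * k = x := ⟨_, rfl⟩
  rw [hx] at hgauss ⊢
  omega
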